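/- arXiv:1512.03648 — 2 statements merged into one kernel-verified Lean document; each statement's English description precedes it below -/
import Mathlib

section
/- Let ψ(x) = x - ⌊x⌋ - 1/2. For every Y > 1 there exist 1-periodic functions A and B with absolutely convergent Fourier expansions A(x) = ∑_{h ≠ 0} A_h e(hx) and B(x) = Y^{-1} + ∑_{h ≠ 0} B_h e(hx), such that |ψ(x) - A(x)| ≤ B(x) for all real x, and the coefficients satisfy |A_h|, |B_h| ≪ min(1/|h|, Y³/|h|⁴) with an absolute implied constant. -/
open scoped Classical

/-- `e(x) = exp(2πix)`. -/
noncomputable def e (x : ℝ) : ℂ := Complex.exp (2 * Real.pi * Complex.I * x)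

/-- The sawtooth function `ψ(x) = x - ⌊x⌋ - 1/2`. -/
noncomputable def sawtooth (x : ℝ) : ℝ := x - ⌊x⌋ - 1 / 2

namespace FIaux

open Complex Real Set MeasureTheory intervalIntegral


/-- The Irwin–Hall-type C² spline (cdf of sum of three uniforms on `[0,δ]`). -/
noncomputable def Kf (δ u : ℝ) : ℝ :=
  (max u 0 ^ 3 - 3 * max (u - δ) 0 ^ 3 + 3 * max (u - 2*δ) 0 ^ 3 - max (u - 3*δ) 0 ^ 3)
    / (6 * δ^3)

lemma Kf_cont (δ : ℝ) : Continuous (Kf δ) := by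
  unfold Kf; fun_prop

lemma Kf_zero (δ : ℝ) (hδ : 0 < δ) : Kf δ 0 = 0 := by
  unfold Kf
  rw [max_eq_right le_rfl, max_eq_right (by linarith), max_eq_right (by linarith),
    max_eq_right (by linarith)]
  ring

lemma Kf_of_ge (δ u : ℝ) (hδ : 0 < δ) (hu : 3*δ ≤ u) : Kf δ u = 1 := by
  unfold Kf
  rw [max_eq_left (by linarith), max_eq_left (by linarith), max_eq_left (by linarith),
    max_eq_left (by linarith)]
  field_simp; ring

lemma Kf_le_one (δ u : ℝ) (hδ : 0 < δ) (hu : 0 ≤ u) : Kf δ u ≤ 1 := by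
  have h6 : (0:ℝ) < 6 * δ^3 := by positivity
  rcases le_or_gt (3*δ) u with h | h
  · exact (Kf_of_ge δ u hδ h).le
  rcases le_or_gt (2*δ) u with h2 | h2
  · unfold Kf
    rw [max_eq_left (by linarith), max_eq_left (by linarith), max_eq_left (by linarith),
      max_eq_right (by linarith), div_le_one h6]
    nlinarith [pow_nonneg (show (0:ℝ) ≤ 3*δ - u by linarith) 3]
  rcases le_or_gt δ u with h1 | h1
  · unfold Kf
    rw [max_eq_left (by linarith), max_eq_left (by linarith), max_eq_right (by linarith),
      max_eq_right (by linarith), div_le_one h6]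
    nlinarith [mul_nonneg (mul_nonneg (sub_nonneg.2 h1) (sub_nonneg.2 h1)) (sub_nonneg.2 h2.le),
      mul_nonneg (mul_nonneg (sub_nonneg.2 h1) (sub_nonneg.2 h2.le)) (sub_nonneg.2 h2.le),
      mul_nonneg (mul_nonneg (sub_nonneg.2 h1) (sub_nonneg.2 h1)) (sub_nonneg.2 h1)]
  · unfold Kf
    rw [max_eq_left (by linarith), max_eq_right (by linarith), max_eq_right (by linarith),
      max_eq_right (by linarith), div_le_one h6]
    nlinarith [pow_le_pow_left₀ hu h1.le 3, pow_pos hδ 3]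




lemma deriv_cubic (c a : ℂ) (hc : c ≠ 0) (z : ℂ) :
    HasDerivAt (fun z : ℂ =>
        (c^3*(z-a)^3 - 3*c^2*(z-a)^2 + 6*c*(z-a) - 6) * Complex.exp (c*z) / c^4)
      ((z-a)^3 * Complex.exp (c*z)) z := by
  have hz : HasDerivAt (fun z : ℂ => z - a) 1 z := (hasDerivAt_id z).sub_const a
  have h1 : HasDerivAt (fun z : ℂ => c^3*(z-a)^3 - 3*c^2*(z-a)^2 + 6*c*(z-a) - 6)
      (3*c^3*(z-a)^2 - 6*c^2*(z-a) + 6*c) z := by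
    have p3 : HasDerivAt (fun z : ℂ => c^3*(z-a)^3) (3*c^3*(z-a)^2) z := by
      have := (hz.pow 3).const_mul (c^3)
      norm_num at this
      refine this.congr_deriv ?_
      ring
    have p2 : HasDerivAt (fun z : ℂ => 3*c^2*(z-a)^2) (6*c^2*(z-a)) z := by
      have := (hz.pow 2).const_mul (3*c^2)
      norm_num at this
      refine this.congr_deriv ?_
      ring
    have p1 : HasDerivAt (fun z : ℂ => 6*c*(z-a)) (6*c) z := by
      have := hz.const_mul (6*c)
      norm_num at this
      convert this using 1
    have h := ((p3.sub p2).add p1).sub_const 6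
    refine h.congr_deriv ?_
    all_goals ring
  have h2 : HasDerivAt (fun z : ℂ => Complex.exp (c*z)) (c * Complex.exp (c*z)) z := by
    simpa [mul_comm] using ((hasDerivAt_id z).const_mul c).cexp
  have h := (h1.mul h2).div_const (c^4)
  refine h.congr_deriv ?_
  field_simp
  ring

lemma integral_cubic (c : ℂ) (hc : c ≠ 0) (hc1 : Complex.exp c = 1) (a : ℝ)
    (h0 : 0 ≤ a) (h1 : a ≤ 1) :
    ∫ u in (0:ℝ)..1, ((max (u - a) 0 : ℝ) : ℂ)^3 * Complex.exp (c*u)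
      = (6*Complex.exp (c*a) + c^3*(1-(a:ℂ))^3 - 3*c^2*(1-(a:ℂ))^2 + 6*c*(1-(a:ℂ)) - 6)/c^4 := by
  have cont : Continuous fun u : ℝ => ((max (u - a) 0 : ℝ) : ℂ)^3 * Complex.exp (c*u) := by
    fun_prop
  have split : ∫ u in (0:ℝ)..1, ((max (u - a) 0 : ℝ) : ℂ)^3 * Complex.exp (c*u)
      = (∫ u in (0:ℝ)..a, ((max (u - a) 0 : ℝ) : ℂ)^3 * Complex.exp (c*u))
        + ∫ u in a..(1:ℝ), ((max (u - a) 0 : ℝ) : ℂ)^3 * Complex.exp (c*u) :=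
    (integral_add_adjacent_intervals (cont.intervalIntegrable 0 a)
      (cont.intervalIntegrable a 1)).symm
  have part0 : (∫ u in (0:ℝ)..a, ((max (u - a) 0 : ℝ) : ℂ)^3 * Complex.exp (c*u)) = 0 := by
    have he : EqOn (fun u : ℝ => ((max (u - a) 0 : ℝ) : ℂ)^3 * Complex.exp (c*u)) 0
        (uIcc 0 a) := by
      intro u hu
      rw [uIcc_of_le h0] at hu
      simp [max_eq_right (sub_nonpos.2 hu.2)]
    rw [integral_congr he]
    simp
  have part1 : (∫ u in a..(1:ℝ), ((max (u - a) 0 : ℝ) : ℂ)^3 * Complex.exp (c*u))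
      = ∫ u in a..(1:ℝ), ((u:ℂ) - a)^3 * Complex.exp (c*u) := by
    apply integral_congr
    intro u hu
    rw [uIcc_of_le h1] at hu
    have hm : max (u - a) 0 = u - a := max_eq_left (sub_nonneg.2 hu.1)
    simp [hm]
  have key : (∫ u in a..(1:ℝ), ((u:ℂ) - a)^3 * Complex.exp (c*u))
      = (6*Complex.exp (c*a) + c^3*(1-(a:ℂ))^3 - 3*c^2*(1-(a:ℂ))^2 + 6*c*(1-(a:ℂ)) - 6)/c^4 := by
    have hder : ∀ u ∈ uIcc a (1:ℝ),
        HasDerivAt (fun u : ℝ =>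
          (c^3*((u:ℂ)-a)^3 - 3*c^2*((u:ℂ)-a)^2 + 6*c*((u:ℂ)-a) - 6) * Complex.exp (c*u) / c^4)
          (((u:ℂ) - a)^3 * Complex.exp (c*u)) u := by
      intro u _
      exact (deriv_cubic c a hc u).comp_ofReal
    have hint : IntervalIntegrable (fun u : ℝ => ((u:ℂ) - a)^3 * Complex.exp (c*u))
        MeasureTheory.volume a 1 := by
      apply Continuous.intervalIntegrable; fun_prop
    rw [integral_eq_sub_of_hasDerivAt hder hint]
    rw [Complex.ofReal_one, mul_one, hc1]
    have hsub : ((a:ℂ) - a) = 0 := by ring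
    rw [hsub]
    field_simp
    ring
  rw [split, part0, part1, key, zero_add]

lemma integral_linear (c : ℂ) (hc : c ≠ 0) (hc1 : Complex.exp c = 1) :
    ∫ u in (0:ℝ)..1, (u:ℂ) * Complex.exp (c*u) = 1/c := by
  have hder : ∀ u ∈ uIcc (0:ℝ) 1,
      HasDerivAt (fun u : ℝ => ((u:ℂ)/c - 1/c^2) * Complex.exp (c*u))
        ((u:ℂ) * Complex.exp (c*u)) u := by
    intro u _
    have key : HasDerivAt (fun z : ℂ => (z/c - 1/c^2) * Complex.exp (c*z))
        ((u:ℂ) * Complex.exp (c*(u:ℂ))) (u:ℂ) := by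
      have g1 : HasDerivAt (fun z : ℂ => z/c - 1/c^2) (1/c) (u:ℂ) := by
        have := ((hasDerivAt_id ((u:ℂ))).div_const c).sub_const (1/c^2)
        simpa using this
      have g2 : HasDerivAt (fun z : ℂ => Complex.exp (c*z)) (c * Complex.exp (c*(u:ℂ)))
          (u:ℂ) := by
        simpa [mul_comm] using ((hasDerivAt_id ((u:ℂ))).const_mul c).cexp
      have h := g1.mul g2
      refine h.congr_deriv ?_
      field_simp
      ring
    exact key.comp_ofReal
  have hint : IntervalIntegrable (fun u : ℝ => (u:ℂ) * Complex.exp (c*u))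
      MeasureTheory.volume 0 1 := by
    apply Continuous.intervalIntegrable; fun_prop
  rw [integral_eq_sub_of_hasDerivAt hder hint]
  rw [Complex.ofReal_one, Complex.ofReal_zero, mul_one, mul_zero, hc1, Complex.exp_zero]
  field_simp
  ring

lemma integral_exp01 (c : ℂ) (hc : c ≠ 0) (hc1 : Complex.exp c = 1) :
    ∫ u in (0:ℝ)..1, Complex.exp (c*u) = 0 := by
  have hder : ∀ u ∈ uIcc (0:ℝ) 1,
      HasDerivAt (fun u : ℝ => Complex.exp (c*u)/c) (Complex.exp (c*u)) u := by
    intro u _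
    have key : HasDerivAt (fun z : ℂ => Complex.exp (c*z)/c) (Complex.exp (c*(u:ℂ))) (u:ℂ) := by
      have g2 : HasDerivAt (fun z : ℂ => Complex.exp (c*z)) (c * Complex.exp (c*(u:ℂ)))
          (u:ℂ) := by
        simpa [mul_comm] using ((hasDerivAt_id ((u:ℂ))).const_mul c).cexp
      have := g2.div_const c
      simpa [mul_div_assoc, mul_div_cancel_left₀ _ hc] using this
    exact key.comp_ofReal
  have hint : IntervalIntegrable (fun u : ℝ => Complex.exp (c*u)) MeasureTheory.volume 0 1 := by
    apply Continuous.intervalIntegrable; fun_prop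
  rw [integral_eq_sub_of_hasDerivAt hder hint]
  rw [Complex.ofReal_one, Complex.ofReal_zero, mul_one, mul_zero, hc1, Complex.exp_zero]
  simp




lemma integral_Kc (c : ℂ) (hc : c ≠ 0) (hc1 : Complex.exp c = 1)
    (δ : ℝ) (hδ : 0 < δ) (h3 : 3*δ < 1) :
    ∫ u in (0:ℝ)..1, ((Kf δ u : ℝ) : ℂ) * Complex.exp (c*u)
      = 1/c + (1 - Complex.exp (c*δ))^3/(δ^3*c^4) := by
  have hδ' : (δ:ℂ) ≠ 0 := Complex.ofReal_ne_zero.mpr hδ.ne'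
  have contf : ∀ a : ℝ, Continuous (fun u : ℝ => ((max (u - a) 0 : ℝ) : ℂ)^3 * Complex.exp (c*u)) := by
    intro a; fun_prop
  have heq : EqOn (fun u : ℝ => ((Kf δ u : ℝ) : ℂ) * Complex.exp (c*u))
      (fun u : ℝ => (1/(6*(δ:ℂ)^3)) *
        (((max (u - 0) 0 : ℝ) : ℂ)^3 * Complex.exp (c*u)
          - 3 * (((max (u - δ) 0 : ℝ) : ℂ)^3 * Complex.exp (c*u))
          + 3 * (((max (u - 2*δ) 0 : ℝ) : ℂ)^3 * Complex.exp (c*u))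
          - ((max (u - 3*δ) 0 : ℝ) : ℂ)^3 * Complex.exp (c*u)))
      (uIcc 0 1) := by
    intro u _
    simp only [sub_zero]
    unfold Kf
    push_cast
    ring
  rw [integral_congr heq, intervalIntegral.integral_const_mul]
  have c3 : Continuous (fun u : ℝ => (3:ℂ) * (((max (u - δ) 0 : ℝ) : ℂ)^3 * Complex.exp (c*u))) :=
    continuous_const.mul (contf δ)
  have c3' : Continuous (fun u : ℝ => (3:ℂ) * (((max (u - 2*δ) 0 : ℝ) : ℂ)^3 * Complex.exp (c*u))) :=
    continuous_const.mul (contf (2*δ))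
  have i1 : IntervalIntegrable (fun u : ℝ => ((max (u - 0) 0 : ℝ) : ℂ)^3 * Complex.exp (c*u)
      - 3 * (((max (u - δ) 0 : ℝ) : ℂ)^3 * Complex.exp (c*u))) MeasureTheory.volume 0 1 :=
    ((contf 0).sub c3).intervalIntegrable 0 1
  have i2 : IntervalIntegrable (fun u : ℝ => (3:ℂ) * (((max (u - 2*δ) 0 : ℝ) : ℂ)^3
      * Complex.exp (c*u))) MeasureTheory.volume 0 1 := c3'.intervalIntegrable 0 1
  have i12 := i1.add i2
  have i3 : IntervalIntegrable (fun u : ℝ => ((max (u - 3*δ) 0 : ℝ) : ℂ)^3 * Complex.exp (c*u))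
      MeasureTheory.volume 0 1 := (contf (3*δ)).intervalIntegrable 0 1
  rw [intervalIntegral.integral_sub i12 i3, intervalIntegral.integral_add i1 i2,
    intervalIntegral.integral_sub ((contf 0).intervalIntegrable 0 1) (c3.intervalIntegrable 0 1),
    intervalIntegral.integral_const_mul, intervalIntegral.integral_const_mul]
  rw [integral_cubic c hc hc1 0 le_rfl zero_le_one,
    integral_cubic c hc hc1 δ hδ.le (by linarith),
    integral_cubic c hc hc1 (2*δ) (by linarith) (by linarith),
    integral_cubic c hc hc1 (3*δ) (by linarith) (by linarith)]
  have e0 : Complex.exp (c*((0:ℝ):ℂ)) = 1 := by norm_num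
  have e2 : Complex.exp (c*((2*δ:ℝ):ℂ)) = Complex.exp (c*((δ:ℝ):ℂ))^2 := by
    have h2 : (c*((2*δ:ℝ):ℂ)) = c*((δ:ℝ):ℂ) + c*((δ:ℝ):ℂ) := by push_cast; ring
    rw [h2, Complex.exp_add]; ring
  have e3 : Complex.exp (c*((3*δ:ℝ):ℂ)) = Complex.exp (c*((δ:ℝ):ℂ))^3 := by
    have h3' : (c*((3*δ:ℝ):ℂ)) = c*((δ:ℝ):ℂ) + (c*((δ:ℝ):ℂ) + c*((δ:ℝ):ℂ)) := by
      push_cast; ring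
    rw [h3', Complex.exp_add, Complex.exp_add]; ring
  rw [e0, e2, e3]
  have hcd : c * ((δ:ℝ):ℂ) = c * (δ:ℂ) := rfl
  rw [hcd]
  generalize Complex.exp (c*(δ:ℂ)) = E
  push_cast
  field_simp
  ring

lemma integral_cubic_real (a : ℝ) (h0 : 0 ≤ a) (h1 : a ≤ 1) :
    ∫ u in (0:ℝ)..1, max (u - a) 0^3 = (1-a)^4/4 := by
  have cont : Continuous fun u : ℝ => max (u - a) 0^3 := by fun_prop
  have split : ∫ u in (0:ℝ)..1, max (u - a) 0^3
      = (∫ u in (0:ℝ)..a, max (u - a) 0^3) + ∫ u in a..(1:ℝ), max (u - a) 0^3 :=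
    (integral_add_adjacent_intervals (cont.intervalIntegrable 0 a)
      (cont.intervalIntegrable a 1)).symm
  have part0 : (∫ u in (0:ℝ)..a, max (u - a) 0^3) = 0 := by
    have he : EqOn (fun u : ℝ => max (u - a) 0^3) 0 (uIcc 0 a) := by
      intro u hu
      rw [uIcc_of_le h0] at hu
      simp [max_eq_right (sub_nonpos.2 hu.2)]
    rw [integral_congr he]; simp
  have part1 : (∫ u in a..(1:ℝ), max (u - a) 0^3) = ∫ u in a..(1:ℝ), (u - a)^3 := by
    apply integral_congr
    intro u hu
    rw [uIcc_of_le h1] at hu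
    simp [max_eq_left (sub_nonneg.2 hu.1)]
  have key : (∫ u in a..(1:ℝ), (u - a)^3) = (1-a)^4/4 := by
    have hder : ∀ u ∈ uIcc a (1:ℝ), HasDerivAt (fun u : ℝ => (u-a)^4/4) ((u - a)^3) u := by
      intro u _
      have h := (((hasDerivAt_id u).sub_const a).pow 4).div_const 4
      refine h.congr_deriv ?_
      norm_num
    rw [integral_eq_sub_of_hasDerivAt hder
      ((by fun_prop : Continuous fun u : ℝ => (u-a)^3).intervalIntegrable a 1)]
    simp
  rw [split, part0, part1, key, zero_add]

lemma integral_Kreal (δ : ℝ) (hδ : 0 < δ) (h3 : 3*δ < 1) :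
    ∫ u in (0:ℝ)..1, Kf δ u = 1 - 3*δ/2 := by
  have contf : ∀ a : ℝ, Continuous (fun u : ℝ => max (u - a) 0^3) := by
    intro a; fun_prop
  have heq : EqOn (fun u : ℝ => Kf δ u)
      (fun u : ℝ => (1/(6*δ^3)) * (max (u - 0) 0^3 - 3 * max (u - δ) 0^3
        + 3 * max (u - 2*δ) 0^3 - max (u - 3*δ) 0^3))
      (uIcc 0 1) := by
    intro u _
    simp only [sub_zero]
    unfold Kf
    ring
  rw [integral_congr heq, intervalIntegral.integral_const_mul]
  have c3 : Continuous (fun u : ℝ => (3:ℝ) * max (u - δ) 0^3) :=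
    continuous_const.mul (contf δ)
  have c3' : Continuous (fun u : ℝ => (3:ℝ) * max (u - 2*δ) 0^3) :=
    continuous_const.mul (contf (2*δ))
  have i1 : IntervalIntegrable (fun u : ℝ => max (u - 0) 0^3 - 3 * max (u - δ) 0^3)
      MeasureTheory.volume 0 1 := ((contf 0).sub c3).intervalIntegrable 0 1
  have i2 : IntervalIntegrable (fun u : ℝ => (3:ℝ) * max (u - 2*δ) 0^3)
      MeasureTheory.volume 0 1 := c3'.intervalIntegrable 0 1
  have i12 := i1.add i2
  have i3 : IntervalIntegrable (fun u : ℝ => max (u - 3*δ) 0^3)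
      MeasureTheory.volume 0 1 := (contf (3*δ)).intervalIntegrable 0 1
  rw [intervalIntegral.integral_sub i12 i3, intervalIntegral.integral_add i1 i2,
    intervalIntegral.integral_sub ((contf 0).intervalIntegrable 0 1) (c3.intervalIntegrable 0 1),
    intervalIntegral.integral_const_mul, intervalIntegral.integral_const_mul]
  rw [integral_cubic_real 0 le_rfl zero_le_one,
    integral_cubic_real δ hδ.le (by linarith),
    integral_cubic_real (2*δ) (by linarith) (by linarith),
    integral_cubic_real (3*δ) (by linarith) (by linarith)]
  field_simp
  ring

lemma fourierCoeff_liftIco01 (F : ℝ → ℂ) (hF : F 0 = F 1) (n : ℤ) :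
    haveI : Fact ((0:ℝ) < 1) := ⟨one_pos⟩
    fourierCoeff (AddCircle.liftIco 1 0 F) n
      = ∫ x in (0:ℝ)..1, Complex.exp (2*π*Complex.I*(-n)*x) * F x := by
  haveI : Fact ((0:ℝ) < 1) := ⟨one_pos⟩
  rw [fourierCoeff_eq_intervalIntegral _ n 0]
  have hb : (0:ℝ) + 1 = 1 := by norm_num
  rw [hb]
  rw [one_div_one, one_smul]
  apply integral_congr
  intro x hx
  rw [uIcc_of_le zero_le_one] at hx
  beta_reduce
  have hfour : (fourier (-n) ((x:ℝ) : AddCircle (1:ℝ)) : ℂ)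
      = Complex.exp (2*π*Complex.I*(-n)*x) := by
    rw [fourier_coe_apply]
    push_cast
    norm_num
  rcases lt_or_eq_of_le hx.2 with hlt | heq1
  · rw [smul_eq_mul, hfour, AddCircle.liftIco_coe_apply (by simpa using ⟨hx.1, hlt⟩)]
  · subst heq1
    have hone : ((1:ℝ) : AddCircle (1:ℝ)) = ((0:ℝ) : AddCircle (1:ℝ)) := by
      have := AddCircle.coe_period (p := (1:ℝ))
      simp [this]
    rw [smul_eq_mul, hfour, hone,
      AddCircle.liftIco_coe_apply (by simp : (0:ℝ) ∈ Ico (0:ℝ) (0+1)), hF]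




/-- The frequency constant `c(n) = 2πi(-n)`. -/
noncomputable def cC (n : ℤ) : ℂ := 2*π*Complex.I*(-(n:ℂ))

lemma cC_ne (n : ℤ) (hn : n ≠ 0) : cC n ≠ 0 := by
  unfold cC
  have h1 : ((n:ℂ)) ≠ 0 := Int.cast_ne_zero.mpr hn
  have hπ : (π:ℂ) ≠ 0 := Complex.ofReal_ne_zero.mpr Real.pi_ne_zero
  simp [h1, hπ, Complex.I_ne_zero, Real.pi_ne_zero]

lemma cC_exp (n : ℤ) : Complex.exp (cC n) = 1 := by
  unfold cC
  have h : 2*(π:ℂ)*Complex.I*(-(n:ℂ)) = ((-n : ℤ) : ℂ) * (2*π*Complex.I) := by push_cast; ring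
  rw [h, Complex.exp_int_mul_two_pi_mul_I]

lemma cC_norm (n : ℤ) : ‖cC n‖ = 2*π*|(n:ℝ)| := by
  unfold cC
  simp [norm_mul, _root_.abs_of_nonneg Real.pi_nonneg]

lemma norm_one_sub_exp (θ : ℝ) : ‖1 - Complex.exp (θ*Complex.I)‖ ≤ min 2 |θ| := by
  apply le_min
  · calc ‖1 - Complex.exp (θ*Complex.I)‖ ≤ ‖(1:ℂ)‖ + ‖Complex.exp (θ*Complex.I)‖ :=
        norm_sub_le _ _
    _ = 2 := by
        rw [norm_one, Complex.norm_exp_ofReal_mul_I]; norm_num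
  · have hre : (1 - Complex.exp (θ*Complex.I)).re = 1 - Real.cos θ := by
      simp [Complex.exp_ofReal_mul_I_re]
    have him : (1 - Complex.exp (θ*Complex.I)).im = - Real.sin θ := by
      simp [Complex.exp_ofReal_mul_I_im]
    have hsq : ‖1 - Complex.exp (θ*Complex.I)‖^2 = 2 - 2*Real.cos θ := by
      rw [Complex.sq_norm, Complex.normSq_apply, hre, him]
      nlinarith [Real.sin_sq_add_cos_sq θ]
    have hcos : 1 - θ^2/2 ≤ Real.cos θ := Real.one_sub_sq_div_two_le_cos
    have h2 : ‖1 - Complex.exp (θ*Complex.I)‖^2 ≤ |θ|^2 := by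
      rw [hsq, _root_.sq_abs]; nlinarith
    nlinarith [norm_nonneg (1 - Complex.exp (θ*Complex.I)), abs_nonneg θ]



/-- Approximant on `[0,1)`: `A(u) = ψ(u) + 3δ/2·stuff`, continuous matching. -/
noncomputable def FA (δ u : ℝ) : ℂ := ((u + 1/2 - 3*δ/2 - Kf δ u : ℝ) : ℂ)

/-- Majorant on `[0,1)`. -/
noncomputable def FBr (δ u : ℝ) : ℝ := 3*δ/2 + (1 - Kf δ u) + (1 - Kf δ (1-u))

noncomputable def FB (δ u : ℝ) : ℂ := ((FBr δ u : ℝ) : ℂ)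

lemma FA_period (δ : ℝ) (hδ : 0 < δ) (h3 : 3*δ < 1) : FA δ 0 = FA δ 1 := by
  unfold FA
  rw [Kf_zero δ hδ, Kf_of_ge δ 1 hδ (by linarith)]
  norm_num
  ring

lemma FB_period (δ : ℝ) : FB δ 0 = FB δ 1 := by
  unfold FB FBr
  norm_num
  ring

lemma coeffA (δ : ℝ) (hδ : 0 < δ) (h3 : 3*δ < 1) (n : ℤ) (hn : n ≠ 0) :
    fourierCoeff (AddCircle.liftIco 1 0 (FA δ)) n
      = -(1 - Complex.exp (cC n * δ))^3/((δ:ℂ)^3*(cC n)^4) := by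
  haveI : Fact ((0:ℝ) < 1) := ⟨one_pos⟩
  rw [fourierCoeff_liftIco01 (FA δ) (FA_period δ hδ h3) n]
  have hc := cC_ne n hn
  have hc1 := cC_exp n
  have heq : EqOn (fun x : ℝ => Complex.exp (2*π*Complex.I*(-(n:ℂ))*x) * FA δ x)
      (fun x : ℝ => (x:ℂ)*Complex.exp (cC n*x)
        + ((1/2 - 3*δ/2 : ℝ):ℂ)*Complex.exp (cC n*x)
        - ((Kf δ x : ℝ):ℂ)*Complex.exp (cC n*x)) (uIcc 0 1) := by
    intro x _
    unfold FA cC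
    push_cast
    ring
  rw [integral_congr heq]
  have ia : IntervalIntegrable (fun x : ℝ => (x:ℂ)*Complex.exp (cC n*x))
      MeasureTheory.volume 0 1 := (by fun_prop : Continuous _).intervalIntegrable 0 1
  have ib : IntervalIntegrable (fun x : ℝ => ((1/2 - 3*δ/2 : ℝ):ℂ)*Complex.exp (cC n*x))
      MeasureTheory.volume 0 1 := (by fun_prop : Continuous _).intervalIntegrable 0 1
  have ic : IntervalIntegrable (fun x : ℝ => ((Kf δ x : ℝ):ℂ)*Complex.exp (cC n*x))
      MeasureTheory.volume 0 1 :=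
    ((Complex.continuous_ofReal.comp (Kf_cont δ)).mul (by fun_prop)).intervalIntegrable 0 1
  rw [intervalIntegral.integral_sub (ia.add ib) ic, intervalIntegral.integral_add ia ib,
    intervalIntegral.integral_const_mul, integral_linear (cC n) hc hc1,
    integral_exp01 (cC n) hc hc1, integral_Kc (cC n) hc hc1 δ hδ h3]
  ring

lemma integral_Kc_flip (c : ℂ) (hc : c ≠ 0) (hc1 : Complex.exp c = 1)
    (δ : ℝ) (hδ : 0 < δ) (h3 : 3*δ < 1) :
    ∫ u in (0:ℝ)..1, ((Kf δ (1-u) : ℝ) : ℂ) * Complex.exp (c*u)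
      = 1/(-c) + (1 - Complex.exp (-c*δ))^3/((δ:ℂ)^3*(-c)^4) := by
  have h := intervalIntegral.integral_comp_sub_left (a := (0:ℝ)) (b := (1:ℝ))
    (fun x : ℝ => ((Kf δ x : ℝ) : ℂ) * Complex.exp (c*(1-x))) 1
  norm_num at h
  rw [h]
  have heq2 : EqOn (fun x : ℝ => ((Kf δ x : ℝ) : ℂ) * Complex.exp (c*(1-x)))
      (fun x : ℝ => ((Kf δ x : ℝ) : ℂ) * Complex.exp ((-c)*x)) (uIcc 0 1) := by
    intro x _
    beta_reduce
    rw [show c*(1-(x:ℂ)) = c + (-c)*x by ring, Complex.exp_add, hc1, one_mul]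
  rw [integral_congr heq2]
  have hnc : (-c) ≠ 0 := neg_ne_zero.mpr hc
  have hnc1 : Complex.exp (-c) = 1 := by rw [Complex.exp_neg, hc1]; norm_num
  exact integral_Kc (-c) hnc hnc1 δ hδ h3

lemma coeffB (δ : ℝ) (hδ : 0 < δ) (h3 : 3*δ < 1) (n : ℤ) (hn : n ≠ 0) :
    fourierCoeff (AddCircle.liftIco 1 0 (FB δ)) n
      = -((1 - Complex.exp (cC n * δ))^3 + (1 - Complex.exp (-(cC n) * δ))^3)
          /((δ:ℂ)^3*(cC n)^4) := by
  haveI : Fact ((0:ℝ) < 1) := ⟨one_pos⟩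
  rw [fourierCoeff_liftIco01 (FB δ) (FB_period δ) n]
  have hc := cC_ne n hn
  have hc1 := cC_exp n
  have heq : EqOn (fun x : ℝ => Complex.exp (2*π*Complex.I*(-(n:ℂ))*x) * FB δ x)
      (fun x : ℝ => ((3*δ/2 + 2 : ℝ):ℂ)*Complex.exp (cC n*x)
        - ((Kf δ x : ℝ):ℂ)*Complex.exp (cC n*x)
        - ((Kf δ (1-x) : ℝ):ℂ)*Complex.exp (cC n*x)) (uIcc 0 1) := by
    intro x _
    unfold FB FBr cC
    push_cast
    ring
  rw [integral_congr heq]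
  have ia : IntervalIntegrable (fun x : ℝ => ((3*δ/2 + 2 : ℝ):ℂ)*Complex.exp (cC n*x))
      MeasureTheory.volume 0 1 := (by fun_prop : Continuous _).intervalIntegrable 0 1
  have ic : IntervalIntegrable (fun x : ℝ => ((Kf δ x : ℝ):ℂ)*Complex.exp (cC n*x))
      MeasureTheory.volume 0 1 :=
    ((Complex.continuous_ofReal.comp (Kf_cont δ)).mul (by fun_prop)).intervalIntegrable 0 1
  have icf : IntervalIntegrable (fun x : ℝ => ((Kf δ (1-x) : ℝ):ℂ)*Complex.exp (cC n*x))
      MeasureTheory.volume 0 1 :=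
    ((Complex.continuous_ofReal.comp ((Kf_cont δ).comp (by fun_prop))).mul
      (by fun_prop)).intervalIntegrable 0 1
  rw [intervalIntegral.integral_sub (ia.sub ic) icf, intervalIntegral.integral_sub ia ic,
    intervalIntegral.integral_const_mul, integral_exp01 (cC n) hc hc1,
    integral_Kc (cC n) hc hc1 δ hδ h3, integral_Kc_flip (cC n) hc hc1 δ hδ h3]
  ring

lemma integral_Kreal_flip (δ : ℝ) (hδ : 0 < δ) (h3 : 3*δ < 1) :
    ∫ u in (0:ℝ)..1, Kf δ (1-u) = 1 - 3*δ/2 := by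
  have h := intervalIntegral.integral_comp_sub_left (a := (0:ℝ)) (b := (1:ℝ)) (Kf δ) 1
  simp only [show (1:ℝ)-1 = 0 by norm_num, show (1:ℝ)-0 = 1 by norm_num] at h
  rw [h, integral_Kreal δ hδ h3]

lemma coeffA0 (δ : ℝ) (hδ : 0 < δ) (h3 : 3*δ < 1) :
    fourierCoeff (AddCircle.liftIco 1 0 (FA δ)) 0 = 0 := by
  haveI : Fact ((0:ℝ) < 1) := ⟨one_pos⟩
  rw [fourierCoeff_liftIco01 (FA δ) (FA_period δ hδ h3) 0]
  have heq : EqOn (fun x : ℝ => Complex.exp (2*π*Complex.I*(-((0:ℤ):ℂ))*x) * FA δ x)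
      (fun x : ℝ => (((x + (1/2 - 3*δ/2)) - Kf δ x : ℝ) : ℂ)) (uIcc 0 1) := by
    intro x _
    unfold FA
    push_cast
    norm_num
    ring
  rw [integral_congr heq, intervalIntegral.integral_ofReal]
  have i1 : IntervalIntegrable (fun x : ℝ => x + (1/2 - 3*δ/2)) MeasureTheory.volume 0 1 :=
    (by fun_prop : Continuous _).intervalIntegrable 0 1
  have hre : (∫ x in (0:ℝ)..1, ((x + (1/2 - 3*δ/2)) - Kf δ x)) = 0 := by
    rw [intervalIntegral.integral_sub i1 ((Kf_cont δ).intervalIntegrable 0 1),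
      intervalIntegral.integral_add intervalIntegrable_id intervalIntegrable_const,
      integral_id, intervalIntegral.integral_const, integral_Kreal δ hδ h3]
    norm_num
    ring
  rw [hre]
  norm_num

lemma coeffB0 (δ : ℝ) (hδ : 0 < δ) (h3 : 3*δ < 1) :
    fourierCoeff (AddCircle.liftIco 1 0 (FB δ)) 0 = ((9*δ/2 : ℝ) : ℂ) := by
  haveI : Fact ((0:ℝ) < 1) := ⟨one_pos⟩
  rw [fourierCoeff_liftIco01 (FB δ) (FB_period δ) 0]
  have heq : EqOn (fun x : ℝ => Complex.exp (2*π*Complex.I*(-((0:ℤ):ℂ))*x) * FB δ x)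
      (fun x : ℝ => ((((3*δ/2 + 2) - Kf δ x) - Kf δ (1-x) : ℝ) : ℂ)) (uIcc 0 1) := by
    intro x _
    unfold FB FBr
    push_cast
    norm_num
    ring
  rw [integral_congr heq, intervalIntegral.integral_ofReal]
  have i1 : IntervalIntegrable (fun x : ℝ => (3*δ/2 + 2) - Kf δ x) MeasureTheory.volume 0 1 :=
    (continuous_const.sub (Kf_cont δ)).intervalIntegrable 0 1
  have i2 : IntervalIntegrable (fun x : ℝ => Kf δ (1-x)) MeasureTheory.volume 0 1 :=
    ((Kf_cont δ).comp (by fun_prop)).intervalIntegrable 0 1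
  have hre : (∫ x in (0:ℝ)..1, (((3*δ/2 + 2) - Kf δ x) - Kf δ (1-x))) = 9*δ/2 := by
    rw [intervalIntegral.integral_sub i1 i2,
      intervalIntegral.integral_sub intervalIntegrable_const
        ((Kf_cont δ).intervalIntegrable 0 1),
      intervalIntegral.integral_const, integral_Kreal δ hδ h3, integral_Kreal_flip δ hδ h3]
    norm_num
    ring
  rw [hre]

lemma one_le_absr (n : ℤ) (hn : n ≠ 0) : (1:ℝ) ≤ |(n:ℝ)| := by
  have h := Int.one_le_abs hn
  calc (1:ℝ) = ((1:ℤ):ℝ) := by norm_num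
  _ ≤ ((|n|:ℤ):ℝ) := by exact_mod_cast h
  _ = |(n:ℝ)| := by push_cast; rfl

lemma norm_w_le (δ : ℝ) (hδ : 0 < δ) (n : ℤ) :
    ‖1 - Complex.exp (cC n * δ)‖ ≤ min 2 (2*π*|(n:ℝ)| *δ) ∧
    ‖1 - Complex.exp (-(cC n) * δ)‖ ≤ min 2 (2*π*|(n:ℝ)| *δ) := by
  have harg : cC n * (δ:ℂ) = ((-(2*π*(n:ℝ)*δ):ℝ):ℂ)*Complex.I := by
    unfold cC; push_cast; ring
  have harg' : -(cC n) * (δ:ℂ) = (((2*π*(n:ℝ)*δ):ℝ):ℂ)*Complex.I := by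
    unfold cC; push_cast; ring
  have habs : |(-(2*π*(n:ℝ)*δ))| = 2*π*|(n:ℝ)| *δ := by
    rw [abs_neg, abs_mul, _root_.abs_of_pos hδ, abs_mul,
      _root_.abs_of_nonneg (by positivity : (0:ℝ) ≤ 2*π)]
  have habs' : |((2*π*(n:ℝ)*δ))| = 2*π*|(n:ℝ)| *δ := by
    rw [abs_mul, _root_.abs_of_pos hδ, abs_mul,
      _root_.abs_of_nonneg (by positivity : (0:ℝ) ≤ 2*π)]
  constructor
  · have h := norm_one_sub_exp (-(2*π*(n:ℝ)*δ))
    rw [← harg, habs] at h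
    exact h
  · have h := norm_one_sub_exp ((2*π*(n:ℝ)*δ))
    rw [← harg', habs'] at h
    exact h

lemma norm_term_le (δ : ℝ) (hδ : 0 < δ) (n : ℤ) (hn : n ≠ 0) (z : ℂ)
    (hz : ‖z‖ ≤ min 2 (2*π*|(n:ℝ)| *δ)) :
    ‖z^3/((δ:ℂ)^3*(cC n)^4)‖
      ≤ min (1/(2*π*|(n:ℝ)|)) (8/(δ^3*(2*π*|(n:ℝ)|)^4)) := by
  have hm : (1:ℝ) ≤ |(n:ℝ)| := one_le_absr n hn
  have hm0 : (0:ℝ) < |(n:ℝ)| := lt_of_lt_of_le one_pos hm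
  have hD : (0:ℝ) < δ^3*(2*π*|(n:ℝ)|)^4 := by positivity
  have hnorm : ‖z^3/((δ:ℂ)^3*(cC n)^4)‖ = ‖z‖^3/(δ^3*(2*π*|(n:ℝ)|)^4) := by
    rw [norm_div, norm_pow, norm_mul, norm_pow, norm_pow, cC_norm,
      Complex.norm_real, Real.norm_eq_abs, _root_.abs_of_pos hδ]
  rw [hnorm]
  apply le_min
  · rw [div_le_div_iff₀ hD (by positivity)]
    calc ‖z‖^3*(2*π*|(n:ℝ)|) ≤ (2*π*|(n:ℝ)| *δ)^3*(2*π*|(n:ℝ)|) := by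
          have h1 : ‖z‖ ≤ 2*π*|(n:ℝ)| *δ := le_trans hz (min_le_right _ _)
          have h2 : ‖z‖^3 ≤ (2*π*|(n:ℝ)| *δ)^3 := pow_le_pow_left₀ (norm_nonneg z) h1 3
          exact mul_le_mul_of_nonneg_right h2 (by positivity)
    _ = 1*(δ^3*(2*π*|(n:ℝ)|)^4) := by ring
  · rw [div_le_div_iff_of_pos_right hD]
    calc ‖z‖^3 ≤ 2^3 := pow_le_pow_left₀ (norm_nonneg z) (le_trans hz (min_le_left _ _)) 3
    _ = 8 := by norm_num

lemma normAh_le (δ : ℝ) (hδ : 0 < δ) (h3 : 3*δ < 1) (n : ℤ) (hn : n ≠ 0) :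
    ‖fourierCoeff (AddCircle.liftIco 1 0 (FA δ)) n‖
      ≤ min (1/(2*π*|(n:ℝ)|)) (8/(δ^3*(2*π*|(n:ℝ)|)^4)) := by
  rw [coeffA δ hδ h3 n hn]
  have h := norm_term_le δ hδ n hn (-(1 - Complex.exp (cC n * δ)))
    (by rw [norm_neg]; exact (norm_w_le δ hδ n).1)
  have heq : (-(1 - Complex.exp (cC n * δ)))^3/((δ:ℂ)^3*(cC n)^4)
      = -(1 - Complex.exp (cC n * δ))^3/((δ:ℂ)^3*(cC n)^4) := by ring
  rwa [heq] at h

lemma normBh_le (δ : ℝ) (hδ : 0 < δ) (h3 : 3*δ < 1) (n : ℤ) (hn : n ≠ 0) :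
    ‖fourierCoeff (AddCircle.liftIco 1 0 (FB δ)) n‖
      ≤ 2 * min (1/(2*π*|(n:ℝ)|)) (8/(δ^3*(2*π*|(n:ℝ)|)^4)) := by
  rw [coeffB δ hδ h3 n hn]
  have hsplit : -((1 - Complex.exp (cC n * δ))^3 + (1 - Complex.exp (-(cC n) * δ))^3)
        /((δ:ℂ)^3*(cC n)^4)
      = (-(1 - Complex.exp (cC n * δ)))^3/((δ:ℂ)^3*(cC n)^4)
        + (-(1 - Complex.exp (-(cC n) * δ)))^3/((δ:ℂ)^3*(cC n)^4) := by ring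
  rw [hsplit]
  have h1 := norm_term_le δ hδ n hn (-(1 - Complex.exp (cC n * δ)))
    (by rw [norm_neg]; exact (norm_w_le δ hδ n).1)
  have h2 := norm_term_le δ hδ n hn (-(1 - Complex.exp (-(cC n) * δ)))
    (by rw [norm_neg]; exact (norm_w_le δ hδ n).2)
  calc ‖_ + _‖ ≤ _ + _ := norm_add_le _ _
  _ ≤ 2 * min (1/(2*π*|(n:ℝ)|)) (8/(δ^3*(2*π*|(n:ℝ)|)^4)) := by
      rw [two_mul]; exact add_le_add h1 h2

lemma min_crude (δ : ℝ) (hδ : 0 < δ) (n : ℤ) (hn : n ≠ 0) :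
    min (1/(2*π*|(n:ℝ)|)) (8/(δ^3*(2*π*|(n:ℝ)|)^4)) ≤ (8/δ^3) * (1/(n:ℝ)^4) := by
  have hm : (1:ℝ) ≤ |(n:ℝ)| := one_le_absr n hn
  have hm0 : (0:ℝ) < |(n:ℝ)| := lt_of_lt_of_le one_pos hm
  have hπ : (6:ℝ) ≤ 2*π := by nlinarith [Real.pi_gt_three]
  calc min (1/(2*π*|(n:ℝ)|)) (8/(δ^3*(2*π*|(n:ℝ)|)^4))
      ≤ 8/(δ^3*(2*π*|(n:ℝ)|)^4) := min_le_right _ _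
  _ ≤ (8/δ^3) * (1/(n:ℝ)^4) := by
      rw [div_mul_div_comm, mul_one]
      apply div_le_div_of_nonneg_left (by norm_num) (by positivity)
      have h1 : (|(n:ℝ)|)^4 = (n:ℝ)^4 := by
        rw [← _root_.abs_pow]
        exact _root_.abs_of_nonneg (by positivity)
      calc δ^3*(n:ℝ)^4 = δ^3*(|(n:ℝ)|)^4 := by rw [h1]
      _ ≤ δ^3*(2*π*|(n:ℝ)|)^4 := by
          apply mul_le_mul_of_nonneg_left _ (by positivity)
          apply pow_le_pow_left₀ (le_of_lt hm0)
          nlinarith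

lemma min_bound (Y : ℝ) (hY : 1 < Y) (n : ℤ) (hn : n ≠ 0) :
    min (1/(2*π*|(n:ℝ)|)) (8/((2/(9*Y))^3*(2*π*|(n:ℝ)|)^4))
      ≤ min (1/|(n:ℝ)|) (Y^3/|(n:ℝ)|^4) := by
  have hm : (1:ℝ) ≤ |(n:ℝ)| := one_le_absr n hn
  have hm0 : (0:ℝ) < |(n:ℝ)| := lt_of_lt_of_le one_pos hm
  have hY0 : (0:ℝ) < Y := by linarith
  have hπ : (6:ℝ) ≤ 2*π := by nlinarith [Real.pi_gt_three]
  apply min_le_min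
  · apply one_div_le_one_div_of_le hm0
    nlinarith
  · rw [div_le_div_iff₀ (by positivity) (by positivity)]
    have h4 : (1296:ℝ) ≤ (2*π)^4 := by
      calc (1296:ℝ) = 6^4 := by norm_num
      _ ≤ (2*π)^4 := pow_le_pow_left₀ (by norm_num) hπ 4
    have hexp : Y^3*((2/(9*Y))^3*(2*π*|(n:ℝ)|)^4)
        = (8:ℝ)/729*((2*π)^4*|(n:ℝ)|^4) := by
      field_simp
      ring
    rw [hexp]
    nlinarith [pow_pos hm0 4]

end FIaux

open Complex Real Set MeasureTheory intervalIntegral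

/-- Vinogradov/Fouvry–Iwaniec approximation: for every `Y > 1` there are 1-periodic
functions `A`, `B` with absolutely convergent Fourier expansions
`A(x) = ∑_{h≠0} A_h e(hx)`, `B(x) = Y⁻¹ + ∑_{h≠0} B_h e(hx)` such that
`|ψ(x) - A(x)| ≤ B(x)` for all `x`, with `|A_h|, |B_h| ≪ min(1/|h|, Y³/|h|⁴)`
(absolute implied constant). -/
theorem stmt_4 :
    ∃ C > (0 : ℝ), ∀ Y : ℝ, 1 < Y →
      ∃ (A : ℝ → ℂ) (B : ℝ → ℝ) (Ah Bh : ℤ → ℂ),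
        Function.Periodic A 1 ∧ Function.Periodic B 1 ∧
        Ah 0 = 0 ∧ Bh 0 = 0 ∧
        Summable (fun h : ℤ => ‖Ah h‖) ∧ Summable (fun h : ℤ => ‖Bh h‖) ∧
        (∀ x : ℝ, A x = ∑' h : ℤ, Ah h * e ((h : ℝ) * x)) ∧
        (∀ x : ℝ, (B x : ℂ) = ((Y⁻¹ : ℝ) : ℂ) + ∑' h : ℤ, Bh h * e ((h : ℝ) * x)) ∧
        (∀ x : ℝ, ‖((sawtooth x : ℝ) : ℂ) - A x‖ ≤ B x) ∧
        (∀ h : ℤ, h ≠ 0 → ‖Ah h‖ ≤ C * min (1 / |(h : ℝ)|) (Y ^ 3 / |(h : ℝ)| ^ 4)) ∧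
        (∀ h : ℤ, h ≠ 0 → ‖Bh h‖ ≤ C * min (1 / |(h : ℝ)|) (Y ^ 3 / |(h : ℝ)| ^ 4)) := by
  refine ⟨2, by norm_num, fun Y hY => ?_⟩
  haveI : Fact ((0:ℝ) < 1) := ⟨one_pos⟩
  have hY0 : (0:ℝ) < Y := by linarith
  set δ : ℝ := 2/(9*Y) with hδdef
  have hδ : 0 < δ := by rw [hδdef]; positivity
  have h3 : 3*δ < 1 := by
    rw [hδdef, show (3:ℝ)*(2/(9*Y)) = 2/(3*Y) by ring, div_lt_one (by positivity)]
    linarith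
  have hinv : (Y⁻¹:ℝ) = 9*δ/2 := by rw [hδdef]; field_simp
  -- continuity of the pieces
  have hKc := FIaux.Kf_cont δ
  have contFA : Continuous (FIaux.FA δ) := by
    unfold FIaux.FA
    exact Complex.continuous_ofReal.comp
      (((continuous_id.add continuous_const).sub continuous_const).sub hKc)
  have contFBr : Continuous (FIaux.FBr δ) := by
    unfold FIaux.FBr
    exact (continuous_const.add (continuous_const.sub hKc)).add
      (continuous_const.sub (hKc.comp (continuous_const.sub continuous_id)))
  have contFB : Continuous (FIaux.FB δ) := by
    unfold FIaux.FB
    exact Complex.continuous_ofReal.comp contFBr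
  set Acm : C(AddCircle (1:ℝ), ℂ) :=
    ⟨AddCircle.liftIco 1 0 (FIaux.FA δ),
     AddCircle.liftIco_zero_continuous (FIaux.FA_period δ hδ h3) contFA.continuousOn⟩ with hAcm
  set Bcm : C(AddCircle (1:ℝ), ℂ) :=
    ⟨AddCircle.liftIco 1 0 (FIaux.FB δ),
     AddCircle.liftIco_zero_continuous (FIaux.FB_period δ) contFB.continuousOn⟩ with hBcm
  have hAcoe : ⇑Acm = AddCircle.liftIco 1 0 (FIaux.FA δ) := rfl
  have hBcoe : ⇑Bcm = AddCircle.liftIco 1 0 (FIaux.FB δ) := rfl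
  -- coercion to the circle
  have coe_fract : ∀ x : ℝ,
      ((x : ℝ) : AddCircle (1:ℝ)) = ((Int.fract x : ℝ) : AddCircle (1:ℝ)) := by
    intro x
    apply (QuotientAddGroup.eq_iff_sub_mem).mpr
    rw [Int.self_sub_fract]
    exact AddSubgroup.mem_zmultiples_iff.mpr ⟨⌊x⌋, by simp⟩
  have coe_add_one : ∀ x : ℝ,
      ((x + 1 : ℝ) : AddCircle (1:ℝ)) = ((x:ℝ) : AddCircle (1:ℝ)) := by
    intro x
    apply (QuotientAddGroup.eq_iff_sub_mem).mpr
    rw [show x + 1 - x = (1:ℝ) by ring]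
    exact AddSubgroup.mem_zmultiples_iff.mpr ⟨1, by simp⟩
  have fract_mem : ∀ x : ℝ, Int.fract x ∈ Set.Ico (0:ℝ) (0+1) := by
    intro x
    constructor
    · exact Int.fract_nonneg x
    · rw [zero_add]; exact Int.fract_lt_one x
  have Aval : ∀ x : ℝ, Acm ((x:ℝ) : AddCircle (1:ℝ)) = FIaux.FA δ (Int.fract x) := by
    intro x
    show AddCircle.liftIco 1 0 (FIaux.FA δ) ((x:ℝ) : AddCircle (1:ℝ)) = _
    rw [coe_fract x]
    exact AddCircle.liftIco_coe_apply (fract_mem x)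
  have Bval : ∀ x : ℝ, Bcm ((x:ℝ) : AddCircle (1:ℝ)) = FIaux.FB δ (Int.fract x) := by
    intro x
    show AddCircle.liftIco 1 0 (FIaux.FB δ) ((x:ℝ) : AddCircle (1:ℝ)) = _
    rw [coe_fract x]
    exact AddCircle.liftIco_coe_apply (fract_mem x)
  have efour : ∀ (i : ℤ) (x : ℝ), (fourier i ((x:ℝ) : AddCircle (1:ℝ)) : ℂ) = e ((i:ℝ)*x) := by
    intro i x
    rw [fourier_coe_apply]
    unfold e
    congr 1
    push_cast
    ring
  have he0 : ∀ x : ℝ, e ((((0:ℤ)):ℝ)*x) = 1 := by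
    intro x
    unfold e
    push_cast
    norm_num
  -- coefficients
  have hA0 : fourierCoeff (⇑Acm) 0 = 0 := by rw [hAcoe]; exact FIaux.coeffA0 δ hδ h3
  have hB0 : fourierCoeff (⇑Bcm) 0 = ((Y⁻¹:ℝ):ℂ) := by
    rw [hBcoe, FIaux.coeffB0 δ hδ h3, hinv]
  -- summability
  have hAbound : ∀ n : ℤ, ‖fourierCoeff (⇑Acm) n‖ ≤ (8/δ^3) * (1/(n:ℝ)^4) := by
    intro n
    rcases eq_or_ne n 0 with rfl | hn
    · rw [hA0]
      simp
    · calc ‖fourierCoeff (⇑Acm) n‖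
          ≤ min (1/(2*π*|(n:ℝ)|)) (8/(δ^3*(2*π*|(n:ℝ)|)^4)) := by
            rw [hAcoe]; exact FIaux.normAh_le δ hδ h3 n hn
      _ ≤ (8/δ^3) * (1/(n:ℝ)^4) := FIaux.min_crude δ hδ n hn
  have hsumA : Summable (fun n : ℤ => ‖fourierCoeff (⇑Acm) n‖) := by
    refine Summable.of_nonneg_of_le (fun _ => norm_nonneg _) hAbound ?_
    exact (summable_one_div_int_pow.mpr (by norm_num)).mul_left _
  have hsumA' : Summable (fourierCoeff (⇑Acm)) := hsumA.of_norm
  have hBhbound : ∀ n : ℤ,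
      ‖(if n = 0 then 0 else fourierCoeff (⇑Bcm) n)‖ ≤ (16/δ^3) * (1/(n:ℝ)^4) := by
    intro n
    rcases eq_or_ne n 0 with rfl | hn
    · simp
    · rw [if_neg hn]
      calc ‖fourierCoeff (⇑Bcm) n‖
          ≤ 2 * min (1/(2*π*|(n:ℝ)|)) (8/(δ^3*(2*π*|(n:ℝ)|)^4)) := by
            rw [hBcoe]; exact FIaux.normBh_le δ hδ h3 n hn
      _ ≤ 2 * ((8/δ^3) * (1/(n:ℝ)^4)) :=
            mul_le_mul_of_nonneg_left (FIaux.min_crude δ hδ n hn) (by norm_num)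
      _ = (16/δ^3) * (1/(n:ℝ)^4) := by ring
  have hsumBh : Summable (fun n : ℤ => ‖(if n = 0 then 0 else fourierCoeff (⇑Bcm) n)‖) := by
    refine Summable.of_nonneg_of_le (fun _ => norm_nonneg _) hBhbound ?_
    exact (summable_one_div_int_pow.mpr (by norm_num)).mul_left _
  have hsumB' : Summable (fourierCoeff (⇑Bcm)) := by
    have h1 : Summable (fun n : ℤ => if n = 0 then (0:ℂ) else fourierCoeff (⇑Bcm) n) :=
      hsumBh.of_norm
    have h2 : Summable (fun n : ℤ => if n = 0 then ((Y⁻¹:ℝ):ℂ) else 0) :=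
      (hasSum_ite_eq 0 _).summable
    have h3 : (fun n : ℤ => (if n = 0 then (0:ℂ) else fourierCoeff (⇑Bcm) n)
        + (if n = 0 then ((Y⁻¹:ℝ):ℂ) else 0)) = fourierCoeff (⇑Bcm) := by
      funext n
      rcases eq_or_ne n 0 with rfl | hn
      · simp [hB0]
      · simp [hn]
    have := h1.add h2
    rwa [h3] at this
  refine ⟨fun x => Acm ((x:ℝ) : AddCircle (1:ℝ)),
         fun x => FIaux.FBr δ (Int.fract x),
         fun n => fourierCoeff (⇑Acm) n,
         fun n => if n = 0 then 0 else fourierCoeff (⇑Bcm) n,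
         ?_, ?_, ?_, ?_, ?_, ?_, ?_, ?_, ?_, ?_, ?_⟩
  · -- periodicity of A
    intro x
    exact congrArg Acm (coe_add_one x)
  · -- periodicity of B
    intro x
    simp only [Int.fract_add_one]
  · exact hA0
  · simp
  · exact hsumA
  · exact hsumBh
  · -- Fourier expansion of A
    intro x
    have hs := has_pointwise_sum_fourier_series_of_summable hsumA'
      ((x:ℝ) : AddCircle (1:ℝ))
    have hfun : (fun i : ℤ => fourierCoeff (⇑Acm) i • fourier i ((x:ℝ) : AddCircle (1:ℝ)))
        = fun i : ℤ => fourierCoeff (⇑Acm) i * e ((i:ℝ)*x) := by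
      funext i
      rw [smul_eq_mul, efour]
    rw [hfun] at hs
    exact hs.tsum_eq.symm
  · -- Fourier expansion of B
    intro x
    have hs := has_pointwise_sum_fourier_series_of_summable hsumB'
      ((x:ℝ) : AddCircle (1:ℝ))
    have hfun : (fun i : ℤ => fourierCoeff (⇑Bcm) i • fourier i ((x:ℝ) : AddCircle (1:ℝ)))
        = fun i : ℤ => fourierCoeff (⇑Bcm) i * e ((i:ℝ)*x) := by
      funext i
      rw [smul_eq_mul, efour]
    rw [hfun] at hs
    have hone : HasSum (fun i : ℤ => if i = 0 then ((Y⁻¹:ℝ):ℂ) else 0) ((Y⁻¹:ℝ):ℂ) :=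
      hasSum_ite_eq 0 _
    have hdiff := hs.sub hone
    have heqf : (fun i : ℤ => fourierCoeff (⇑Bcm) i * e ((i:ℝ)*x)
          - (if i = 0 then ((Y⁻¹:ℝ):ℂ) else 0))
        = fun i : ℤ => (if i = 0 then 0 else fourierCoeff (⇑Bcm) i) * e ((i:ℝ)*x) := by
      funext i
      rcases eq_or_ne i 0 with rfl | hi
      · rw [hB0, if_pos rfl, if_pos rfl, he0 x]
        ring
      · rw [if_neg hi, if_neg hi]
        ring
    rw [heqf] at hdiff
    have hBx : ((FIaux.FBr δ (Int.fract x) : ℝ) : ℂ) = Bcm ((x:ℝ) : AddCircle (1:ℝ)) := by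
      rw [Bval x]
      rfl
    beta_reduce
    rw [hBx, hdiff.tsum_eq]
    ring
  · -- domination
    intro x
    beta_reduce
    have hu0 : 0 ≤ Int.fract x := Int.fract_nonneg x
    have hu1 : Int.fract x < 1 := Int.fract_lt_one x
    have hsaw : sawtooth x = Int.fract x - 1/2 := by
      unfold sawtooth
      rw [show x - (⌊x⌋:ℝ) - 1/2 = (x - ⌊x⌋) - 1/2 by ring, Int.self_sub_floor]
    have hdiffv : ((sawtooth x : ℝ):ℂ) - FIaux.FA δ (Int.fract x)
        = (((3*δ/2 - (1 - FIaux.Kf δ (Int.fract x))) : ℝ) : ℂ) := by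
      rw [hsaw]
      unfold FIaux.FA
      push_cast
      ring
    rw [Aval x, hdiffv, Complex.norm_real, Real.norm_eq_abs]
    have hg1 : 0 ≤ 1 - FIaux.Kf δ (Int.fract x) := by
      linarith [FIaux.Kf_le_one δ (Int.fract x) hδ hu0]
    have hg2 : 0 ≤ 1 - FIaux.Kf δ (1 - Int.fract x) := by
      linarith [FIaux.Kf_le_one δ (1 - Int.fract x) hδ (by linarith)]
    unfold FIaux.FBr
    rw [abs_sub_le_iff]
    constructor
    · linarith
    · linarith
  · -- coefficient bound for A
    intro n hn
    calc ‖fourierCoeff (⇑Acm) n‖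
        ≤ min (1/(2*π*|(n:ℝ)|)) (8/(δ^3*(2*π*|(n:ℝ)|)^4)) := by
          rw [hAcoe]; exact FIaux.normAh_le δ hδ h3 n hn
    _ ≤ min (1/|(n:ℝ)|) (Y^3/|(n:ℝ)|^4) := by
          rw [hδdef]; exact FIaux.min_bound Y hY n hn
    _ ≤ 2 * min (1/|(n:ℝ)|) (Y^3/|(n:ℝ)|^4) := by
          have h1 : (0:ℝ) ≤ min (1/|(n:ℝ)|) (Y^3/|(n:ℝ)|^4) :=
            le_min (by positivity) (by positivity)
          linarith
  · -- coefficient bound for B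
    intro n hn
    beta_reduce
    rw [if_neg hn]
    calc ‖fourierCoeff (⇑Bcm) n‖
        ≤ 2 * min (1/(2*π*|(n:ℝ)|)) (8/(δ^3*(2*π*|(n:ℝ)|)^4)) := by
          rw [hBcoe]; exact FIaux.normBh_le δ hδ h3 n hn
    _ ≤ 2 * min (1/|(n:ℝ)|) (Y^3/|(n:ℝ)|^4) := by
          apply mul_le_mul_of_nonneg_left _ (by norm_num)
          rw [hδdef]; exact FIaux.min_bound Y hY n hn
end

section
/- Assume: (i) for all primes q ≤ X^{1/2} and gcd(a,q)=1, E(X,q,a) ≪_ε X^{1/2} q^{-1/2} + q^{1/2+ε} (Hooley); and (ii) Theorem: for each 0 < γ < 1/2 there is C(γ) with |E(X,q,a)| ≤ C(γ)(X^{1/3}(log log X)^{7/3}/(log X)^{1/6 - γ/3} + X (log log X)²/(q (log X)^{γ/2})) for all primes q ≤ X. Deduce: for every ε > 0, uniformly for primes q ≤ X^{2/3}(log X)^{1/6 - ε} and gcd(a,q)=1, ∑_{n ≤ X, n ≡ a (mod q)} μ²(n) ~ (6/π²)(1 - 1/q²)^{-1} X/q as X → ∞. -/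
open Finset
open scoped Classical

/-- The error term for squarefree numbers in arithmetic progressions. -/
noncomputable def errTerm (X : ℝ) (q a : ℕ) : ℝ :=
  (((Finset.Icc 1 ⌊X⌋₊).filter (fun n => Squarefree n ∧ (n : ZMod q) = (a : ZMod q))).card : ℝ)
    - (1 / (Nat.totient q : ℝ)) *
        (((Finset.Icc 1 ⌊X⌋₊).filter (fun n => Squarefree n ∧ Nat.Coprime n q)).card : ℝ)

set_option maxHeartbeats 1000000 in
/-- Given Hooley's bound, the bound of Theorem 3 of the paper, and the asymptotic for the
main term, the asymptotic formula for squarefree numbers in progressions holds uniformly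
for primes `q ≤ X^{2/3} (log X)^{1/6-ε}`. -/
theorem stmt_13
    (hHooley : ∀ ε > (0 : ℝ), ∃ C > (0 : ℝ), ∀ (X : ℝ) (q a : ℕ),
      1 ≤ X → q.Prime → (q : ℝ) ≤ X ^ ((1 : ℝ) / 2) → Nat.Coprime a q →
      |errTerm X q a| ≤ C * (X ^ ((1 : ℝ) / 2) * (q : ℝ) ^ (-(1 : ℝ) / 2)
        + (q : ℝ) ^ ((1 : ℝ) / 2 + ε)))
    (hThm : ∀ γ : ℝ, 0 < γ → γ < 1 / 2 → ∃ C > (0 : ℝ), ∀ (X : ℝ) (q a : ℕ),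
      3 ≤ X → q.Prime → (q : ℝ) ≤ X → Nat.Coprime a q →
      |errTerm X q a| ≤ C * (X ^ ((1 : ℝ) / 3) *
          (Real.log (Real.log X)) ^ ((7 : ℝ) / 3) / (Real.log X) ^ ((1 : ℝ) / 6 - γ / 3)
        + X * (Real.log (Real.log X)) ^ 2 / ((q : ℝ) * (Real.log X) ^ (γ / 2))))
    (hMain : ∀ ε > (0 : ℝ), ∃ C > (0 : ℝ), ∀ (X : ℝ) (q : ℕ), 1 ≤ X → q.Prime →
      |(1 / (Nat.totient q : ℝ)) *
          (((Finset.Icc 1 ⌊X⌋₊).filter (fun n => Squarefree n ∧ Nat.Coprime n q)).card : ℝ)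
        - (6 / Real.pi ^ 2) * (1 - 1 / (q : ℝ) ^ 2)⁻¹ * (X / q)|
        ≤ C * X ^ ((1 : ℝ) / 2 + ε) / q) :
    ∀ ε > (0 : ℝ), ∀ c > (0 : ℝ), ∃ X₀ : ℝ, ∀ X ≥ X₀, ∀ q a : ℕ,
      q.Prime → (q : ℝ) ≤ X ^ ((2 : ℝ) / 3) * (Real.log X) ^ ((1 : ℝ) / 6 - ε) →
      Nat.Coprime a q →
      |(((Finset.Icc 1 ⌊X⌋₊).filter
            (fun n => Squarefree n ∧ (n : ZMod q) = (a : ZMod q))).card : ℝ)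
          - (6 / Real.pi ^ 2) * (1 - 1 / (q : ℝ) ^ 2)⁻¹ * (X / q)|
        ≤ c * ((6 / Real.pi ^ 2) * (1 - 1 / (q : ℝ) ^ 2)⁻¹ * (X / q)) := by
  intro ε hε c hc
  set ε₁ : ℝ := min ε (1/4) with hε₁def
  have hε₁ : 0 < ε₁ := lt_min hε (by norm_num)
  have hε₁ε : ε₁ ≤ ε := min_le_left _ _
  have hε₁4 : ε₁ ≤ 1/4 := min_le_right _ _
  obtain ⟨CT, hCT, hT⟩ := hThm ε₁ hε₁ (by linarith)
  obtain ⟨CM, hCM, hM⟩ := hMain (1/4) (by norm_num)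
  set c' : ℝ := c * (6 / Real.pi ^ 2) with hc'def
  have hc' : 0 < c' := by
    have := Real.pi_pos
    positivity
  -- limit facts
  have base1 : Filter.Tendsto (fun u : ℝ => Real.log u ^ ((7:ℝ)/3) * u ^ (-(2*ε₁/3)))
      Filter.atTop (nhds 0) := by
    have h := (isLittleO_log_rpow_rpow_atTop ((7:ℝ)/3)
      (show 0 < 2*ε₁/3 by positivity)).tendsto_div_nhds_zero
    refine h.congr' ?_
    filter_upwards [Filter.eventually_gt_atTop (0:ℝ)] with u hu
    rw [Real.rpow_neg hu.le, div_eq_mul_inv]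
  have base2 : Filter.Tendsto (fun u : ℝ => Real.log u ^ 2 * u ^ (-(ε₁/2)))
      Filter.atTop (nhds 0) := by
    have h := (isLittleO_log_rpow_rpow_atTop ((2:ℝ))
      (show 0 < ε₁/2 by positivity)).tendsto_div_nhds_zero
    refine h.congr' ?_
    filter_upwards [Filter.eventually_gt_atTop (0:ℝ)] with u hu
    rw [Real.rpow_neg hu.le, div_eq_mul_inv, show ((2:ℝ)) = ((2:ℕ):ℝ) by norm_num,
      Real.rpow_natCast]
  have t1 : Filter.Tendsto
      (fun X : ℝ => CT * (Real.log (Real.log X) ^ ((7:ℝ)/3) * Real.log X ^ (-(2*ε₁/3))))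
      Filter.atTop (nhds 0) := by
    have := (base1.comp Real.tendsto_log_atTop).const_mul CT
    rwa [mul_zero] at this
  have t2 : Filter.Tendsto
      (fun X : ℝ => CT * (Real.log (Real.log X) ^ 2 * Real.log X ^ (-(ε₁/2))))
      Filter.atTop (nhds 0) := by
    have := (base2.comp Real.tendsto_log_atTop).const_mul CT
    rwa [mul_zero] at this
  have t3 : Filter.Tendsto (fun X : ℝ => CM * X ^ (-((1:ℝ)/4))) Filter.atTop (nhds 0) := by
    have := (tendsto_rpow_neg_atTop (show (0:ℝ) < 1/4 by norm_num)).const_mul CM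
    rwa [mul_zero] at this
  have hlogsmall : ∀ᶠ X : ℝ in Filter.atTop, Real.log X ≤ X ^ ((1:ℝ)/3) := by
    have h := (isLittleO_log_rpow_atTop (show (0:ℝ) < 1/3 by norm_num)).def one_pos
    filter_upwards [h, Filter.eventually_ge_atTop (0:ℝ)] with X h1 h2
    have : ‖Real.log X‖ ≤ 1 * ‖X ^ ((1:ℝ)/3)‖ := h1
    calc Real.log X ≤ ‖Real.log X‖ := le_abs_self _
      _ ≤ 1 * ‖X ^ ((1:ℝ)/3)‖ := this
      _ = X ^ ((1:ℝ)/3) := by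
          rw [one_mul, Real.norm_eq_abs, abs_of_nonneg (Real.rpow_nonneg h2 _)]
  have hev : ∀ᶠ X : ℝ in Filter.atTop, 3 ≤ X ∧ 1 ≤ Real.log X ∧
      1 ≤ Real.log (Real.log X) ∧ Real.log X ≤ X ^ ((1:ℝ)/3) ∧
      CT * (Real.log (Real.log X) ^ ((7:ℝ)/3) * Real.log X ^ (-(2*ε₁/3))) ≤ c'/4 ∧
      CT * (Real.log (Real.log X) ^ 2 * Real.log X ^ (-(ε₁/2))) ≤ c'/4 ∧
      CM * X ^ (-((1:ℝ)/4)) ≤ c'/2 := by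
    filter_upwards [Filter.eventually_ge_atTop (3:ℝ),
      Real.tendsto_log_atTop.eventually_ge_atTop (1:ℝ),
      (Real.tendsto_log_atTop.comp Real.tendsto_log_atTop).eventually_ge_atTop (1:ℝ),
      hlogsmall,
      t1.eventually_le_const (show (0:ℝ) < c'/4 by positivity),
      t2.eventually_le_const (show (0:ℝ) < c'/4 by positivity),
      t3.eventually_le_const (show (0:ℝ) < c'/2 by positivity)] with X h1 h2 h3 h4 h5 h6 h7
    exact ⟨h1, h2, h3, h4, h5, h6, h7⟩
  obtain ⟨X₀, hX₀⟩ := Filter.eventually_atTop.mp hev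
  refine ⟨X₀, ?_⟩
  intro X hX q a hq hqle hcop
  obtain ⟨h3, hlg1, hll1, hlgX, hA, hB, hC⟩ := hX₀ X hX
  have hX1 : (1:ℝ) ≤ X := by linarith
  have hXpos : (0:ℝ) < X := by linarith
  have hlg0 : (0:ℝ) < Real.log X := by linarith
  have hll0 : (0:ℝ) < Real.log (Real.log X) := by linarith
  have hq2 : (2:ℝ) ≤ (q:ℝ) := by exact_mod_cast hq.two_le
  have hq0 : (0:ℝ) < (q:ℝ) := by linarith
  -- q ≤ X^{2/3} (log X)^{1/6 - ε₁}
  have hqle' : (q:ℝ) ≤ X ^ ((2:ℝ)/3) * Real.log X ^ ((1:ℝ)/6 - ε₁) := by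
    refine hqle.trans (mul_le_mul_of_nonneg_left ?_ (Real.rpow_nonneg hXpos.le _))
    exact Real.rpow_le_rpow_of_exponent_le hlg1 (by linarith)
  -- q ≤ X
  have hqX : (q:ℝ) ≤ X := by
    have h1 : Real.log X ^ ((1:ℝ)/6 - ε₁) ≤ X ^ ((1:ℝ)/3) := by
      calc Real.log X ^ ((1:ℝ)/6 - ε₁) ≤ Real.log X ^ (1:ℝ) :=
            Real.rpow_le_rpow_of_exponent_le hlg1 (by linarith)
        _ = Real.log X := Real.rpow_one _
        _ ≤ X ^ ((1:ℝ)/3) := hlgX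
    calc (q:ℝ) ≤ X ^ ((2:ℝ)/3) * Real.log X ^ ((1:ℝ)/6 - ε₁) := hqle'
      _ ≤ X ^ ((2:ℝ)/3) * X ^ ((1:ℝ)/3) :=
          mul_le_mul_of_nonneg_left h1 (Real.rpow_nonneg hXpos.le _)
      _ = X := by rw [← Real.rpow_add hXpos]; norm_num
  have herr := hT X q a h3 hq hqX hcop
  have hmain := hM X q hX1 hq
  -- core inequality for the first term
  have hcore : (q:ℝ) * (X ^ ((1:ℝ)/3) * Real.log X ^ (2*ε₁/3))
      ≤ X * Real.log X ^ ((1:ℝ)/6 - ε₁/3) := by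
    have h := mul_le_mul_of_nonneg_right hqle'
      (show (0:ℝ) ≤ X ^ ((1:ℝ)/3) * Real.log X ^ (2*ε₁/3) by positivity)
    calc (q:ℝ) * (X ^ ((1:ℝ)/3) * Real.log X ^ (2*ε₁/3))
        ≤ X ^ ((2:ℝ)/3) * Real.log X ^ ((1:ℝ)/6 - ε₁) *
            (X ^ ((1:ℝ)/3) * Real.log X ^ (2*ε₁/3)) := h
      _ = (X ^ ((2:ℝ)/3) * X ^ ((1:ℝ)/3)) *
            (Real.log X ^ ((1:ℝ)/6 - ε₁) * Real.log X ^ (2*ε₁/3)) := by ring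
      _ = X * Real.log X ^ ((1:ℝ)/6 - ε₁/3) := by
          rw [← Real.rpow_add hXpos, ← Real.rpow_add hlg0,
            show (2:ℝ)/3 + 1/3 = 1 by norm_num, Real.rpow_one,
            show (1:ℝ)/6 - ε₁ + 2*ε₁/3 = 1/6 - ε₁/3 by ring]
  have hT1 : X ^ ((1:ℝ)/3) * Real.log (Real.log X) ^ ((7:ℝ)/3)
        / Real.log X ^ ((1:ℝ)/6 - ε₁/3)
      ≤ X / q * (Real.log (Real.log X) ^ ((7:ℝ)/3) * Real.log X ^ (-(2*ε₁/3))) := by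
    have hre : X / q * (Real.log (Real.log X) ^ ((7:ℝ)/3) * Real.log X ^ (-(2*ε₁/3)))
        = X * Real.log (Real.log X) ^ ((7:ℝ)/3) / ((q:ℝ) * Real.log X ^ (2*ε₁/3)) := by
      rw [Real.rpow_neg hlg0.le]
      field_simp
    rw [hre, div_le_div_iff₀ (by positivity) (by positivity)]
    calc X ^ ((1:ℝ)/3) * Real.log (Real.log X) ^ ((7:ℝ)/3) * ((q:ℝ) * Real.log X ^ (2*ε₁/3))
        = Real.log (Real.log X) ^ ((7:ℝ)/3) *
            ((q:ℝ) * (X ^ ((1:ℝ)/3) * Real.log X ^ (2*ε₁/3))) := by ring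
      _ ≤ Real.log (Real.log X) ^ ((7:ℝ)/3) * (X * Real.log X ^ ((1:ℝ)/6 - ε₁/3)) :=
          mul_le_mul_of_nonneg_left hcore (by positivity)
      _ = X * Real.log (Real.log X) ^ ((7:ℝ)/3) * Real.log X ^ ((1:ℝ)/6 - ε₁/3) := by ring
  have hT2 : X * Real.log (Real.log X) ^ 2 / ((q:ℝ) * Real.log X ^ (ε₁/2))
      = X / q * (Real.log (Real.log X) ^ 2 * Real.log X ^ (-(ε₁/2))) := by
    rw [Real.rpow_neg hlg0.le]
    field_simp
  have hMeq : CM * X ^ ((1:ℝ)/2 + 1/4) / q = X / q * (CM * X ^ (-((1:ℝ)/4))) := by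
    rw [show (1:ℝ)/2 + 1/4 = 1 + -((1:ℝ)/4) by norm_num, Real.rpow_add hXpos, Real.rpow_one]
    ring
  -- triangle inequality
  have key : |(((Finset.Icc 1 ⌊X⌋₊).filter
        (fun n => Squarefree n ∧ (n : ZMod q) = (a : ZMod q))).card : ℝ)
        - (6 / Real.pi ^ 2) * (1 - 1 / (q : ℝ) ^ 2)⁻¹ * (X / q)|
      ≤ |errTerm X q a| +
        |(1 / (Nat.totient q : ℝ)) *
          (((Finset.Icc 1 ⌊X⌋₊).filter (fun n => Squarefree n ∧ Nat.Coprime n q)).card : ℝ)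
        - (6 / Real.pi ^ 2) * (1 - 1 / (q : ℝ) ^ 2)⁻¹ * (X / q)| := by
    have heq : (((Finset.Icc 1 ⌊X⌋₊).filter
          (fun n => Squarefree n ∧ (n : ZMod q) = (a : ZMod q))).card : ℝ)
          - (6 / Real.pi ^ 2) * (1 - 1 / (q : ℝ) ^ 2)⁻¹ * (X / q)
        = errTerm X q a + ((1 / (Nat.totient q : ℝ)) *
          (((Finset.Icc 1 ⌊X⌋₊).filter (fun n => Squarefree n ∧ Nat.Coprime n q)).card : ℝ)
        - (6 / Real.pi ^ 2) * (1 - 1 / (q : ℝ) ^ 2)⁻¹ * (X / q)) := by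
      unfold errTerm; ring
    rw [heq]
    exact abs_add_le _ _
  have hXq0 : (0:ℝ) ≤ X / q := by positivity
  have hfinal : |(((Finset.Icc 1 ⌊X⌋₊).filter
        (fun n => Squarefree n ∧ (n : ZMod q) = (a : ZMod q))).card : ℝ)
        - (6 / Real.pi ^ 2) * (1 - 1 / (q : ℝ) ^ 2)⁻¹ * (X / q)| ≤ c' * (X / q) := by
    calc |(((Finset.Icc 1 ⌊X⌋₊).filter
          (fun n => Squarefree n ∧ (n : ZMod q) = (a : ZMod q))).card : ℝ)
          - (6 / Real.pi ^ 2) * (1 - 1 / (q : ℝ) ^ 2)⁻¹ * (X / q)|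
        ≤ |errTerm X q a| +
          |(1 / (Nat.totient q : ℝ)) *
            (((Finset.Icc 1 ⌊X⌋₊).filter (fun n => Squarefree n ∧ Nat.Coprime n q)).card : ℝ)
          - (6 / Real.pi ^ 2) * (1 - 1 / (q : ℝ) ^ 2)⁻¹ * (X / q)| := key
      _ ≤ CT * (X ^ ((1:ℝ)/3) * Real.log (Real.log X) ^ ((7:ℝ)/3)
            / Real.log X ^ ((1:ℝ)/6 - ε₁/3)
          + X * Real.log (Real.log X) ^ 2 / ((q:ℝ) * Real.log X ^ (ε₁/2)))
          + CM * X ^ ((1:ℝ)/2 + 1/4) / q := add_le_add herr hmain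
      _ ≤ (X / q * (CT * (Real.log (Real.log X) ^ ((7:ℝ)/3) * Real.log X ^ (-(2*ε₁/3))))
          + X / q * (CT * (Real.log (Real.log X) ^ 2 * Real.log X ^ (-(ε₁/2)))))
          + X / q * (CM * X ^ (-((1:ℝ)/4))) := by
          rw [mul_add, hT2, hMeq]
          have h1 : CT * (X ^ ((1:ℝ)/3) * Real.log (Real.log X) ^ ((7:ℝ)/3)
              / Real.log X ^ ((1:ℝ)/6 - ε₁/3))
              ≤ X / q * (CT * (Real.log (Real.log X) ^ ((7:ℝ)/3)
                * Real.log X ^ (-(2*ε₁/3)))) := by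
            calc CT * (X ^ ((1:ℝ)/3) * Real.log (Real.log X) ^ ((7:ℝ)/3)
                  / Real.log X ^ ((1:ℝ)/6 - ε₁/3))
                ≤ CT * (X / q * (Real.log (Real.log X) ^ ((7:ℝ)/3)
                    * Real.log X ^ (-(2*ε₁/3)))) := mul_le_mul_of_nonneg_left hT1 hCT.le
              _ = X / q * (CT * (Real.log (Real.log X) ^ ((7:ℝ)/3)
                    * Real.log X ^ (-(2*ε₁/3)))) := by ring
          have h2 : CT * (X / q * (Real.log (Real.log X) ^ 2 * Real.log X ^ (-(ε₁/2))))
              = X / q * (CT * (Real.log (Real.log X) ^ 2 * Real.log X ^ (-(ε₁/2)))) := by ring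
          linarith
      _ = X / q * (CT * (Real.log (Real.log X) ^ ((7:ℝ)/3) * Real.log X ^ (-(2*ε₁/3)))
          + CT * (Real.log (Real.log X) ^ 2 * Real.log X ^ (-(ε₁/2)))
          + CM * X ^ (-((1:ℝ)/4))) := by ring
      _ ≤ X / q * (c'/4 + c'/4 + c'/2) :=
          mul_le_mul_of_nonneg_left (by linarith) hXq0
      _ = c' * (X / q) := by ring
  refine hfinal.trans ?_
  have hinv : (1:ℝ) ≤ (1 - 1 / (q:ℝ) ^ 2)⁻¹ := by
    have hq4 : (4:ℝ) ≤ (q:ℝ)^2 := by nlinarith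
    have h1 : (0:ℝ) < 1 - 1/(q:ℝ)^2 := by
      have : (1:ℝ)/(q:ℝ)^2 ≤ 1/4 := by
        apply div_le_div_of_nonneg_left (by norm_num) (by norm_num) hq4
      linarith
    have h2 : 1 - 1/(q:ℝ)^2 ≤ 1 := by
      have : (0:ℝ) ≤ 1/(q:ℝ)^2 := by positivity
      linarith
    exact (one_le_inv₀ h1).mpr h2
  have hpi := Real.pi_pos
  calc c' * (X / q) = c * ((6 / Real.pi ^ 2) * 1 * (X / q)) := by rw [hc'def]; ring
    _ ≤ c * ((6 / Real.pi ^ 2) * (1 - 1 / (q:ℝ) ^ 2)⁻¹ * (X / q)) := by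
        apply mul_le_mul_of_nonneg_left _ hc.le
        apply mul_le_mul_of_nonneg_right _ hXq0
        exact mul_le_mul_of_nonneg_left hinv (by positivity)
end
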